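/- Let (E,d) be a complete separable metric space and μ a Borel probability measure on E satisfying the quadratic transportation cost inequality T₂(C). Then μ satisfies (Tronc): for every a > e^{3/2} there exists a constant c(a) > 0 such that for every probability measure ν = h·μ with H(ν,μ) ≤ 1/2 one has W₂²(ν, ν_a) ≤ c(a)·H(ν,μ). -/

import Mathlib

set_option maxHeartbeats 1000000


open MeasureTheory ProbabilityTheory ENNReal
open scoped Classical NNReal

noncomputable section

/-- `π` is a coupling of the probability measures `μ` and `ν`:
its marginal distributions are `μ` and `ν`. -/
def IsCoupling {E : Type*} [MeasurableSpace E] (π : Measure (E × E)) (μ ν : Measure E) : Prop :=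
  π.map Prod.fst = μ ∧ π.map Prod.snd = ν

/-- The `p`-th power of the `L^p` Wasserstein distance, `W_p^p(μ,ν)`, as the infimum of the
transportation cost over all couplings. -/
def Wcost {E : Type*} [MetricSpace E] [MeasurableSpace E] (p : ℝ) (μ ν : Measure E) : ℝ≥0∞ :=
  ⨅ (π : Measure (E × E)) (_ : IsProbabilityMeasure π) (_ : IsCoupling π μ ν),
    ∫⁻ z, ENNReal.ofReal (dist z.1 z.2 ^ p) ∂π

/-- Relative entropy (Kullback-Leibler information) `H(ν,μ)`:
`∫ log (dν/dμ) dν` if `ν ≪ μ` (and the integral exists), `+∞` otherwise. -/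
def relEnt {Ω : Type*} [MeasurableSpace Ω] (ν μ : Measure Ω) : ℝ≥0∞ :=
  if ν ≪ μ ∧ Integrable (fun x => Real.log ((ν.rnDeriv μ) x).toReal) ν
  then ENNReal.ofReal (∫ x, Real.log ((ν.rnDeriv μ) x).toReal ∂ν)
  else ∞

/-- The transportation cost inequality `T_p(C)`: `W_p(μ,ν) ≤ √(2 C H(ν,μ))` for every
probability measure `ν`. -/
def TCI {E : Type*} [MetricSpace E] [MeasurableSpace E] (p : ℝ) (C : ℝ) (μ : Measure E) : Prop :=
  ∀ ν : Measure E, IsProbabilityMeasure ν →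
    Wcost p μ ν ^ (1 / p) ≤ (ENNReal.ofReal (2 * C) * relEnt ν μ) ^ (1 / 2 : ℝ)

/-- The measure `ν = h·μ`. -/
def densMeas {Ω : Type*} [MeasurableSpace Ω] (μ : Measure Ω) (h : Ω → ℝ) : Measure Ω :=
  μ.withDensity fun x => ENNReal.ofReal (h x)

/-- The truncated measure `ν_a = (1/ν(h ≤ a)) · h · 1_{h ≤ a} · μ` for `ν = h·μ`. -/
def truncMeas {Ω : Type*} [MeasurableSpace Ω] (μ : Measure Ω) (h : Ω → ℝ) (a : ℝ) : Measure Ω :=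
  ((densMeas μ h) {x | h x ≤ a})⁻¹ • (densMeas μ h).restrict {x | h x ≤ a}

section Glue

lemma sq_add_le (x y : ℝ≥0∞) : (x + y) ^ (2:ℝ) ≤ 4 * x ^ (2:ℝ) + 4 * y ^ (2:ℝ) := by
  have hmax : x + y ≤ 2 * max x y := by
    rcases le_total x y with h | h
    · calc x + y ≤ y + y := by gcongr
        _ = 2 * y := (two_mul y).symm
        _ ≤ 2 * max x y := by gcongr; exact le_max_right x y
    · calc x + y ≤ x + x := by gcongr
        _ = 2 * x := (two_mul x).symm
        _ ≤ 2 * max x y := by gcongr; exact le_max_left x y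
  calc (x + y) ^ (2:ℝ) ≤ (2 * max x y) ^ (2:ℝ) := by
        exact ENNReal.rpow_le_rpow hmax (by norm_num)
    _ = 2 ^ (2:ℝ) * (max x y) ^ (2:ℝ) := ENNReal.mul_rpow_of_nonneg _ _ (by norm_num)
    _ ≤ 4 * (x ^ (2:ℝ) + y ^ (2:ℝ)) := by
        have h2 : (2:ℝ≥0∞) ^ (2:ℝ) = 4 := by
          rw [show (2:ℝ) = ((2:ℕ):ℝ) by norm_num, ENNReal.rpow_natCast]; norm_num
        rw [h2]
        gcongr
        rcases le_total x y with h | h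
        · rw [max_eq_right h]; exact le_add_self
        · rw [max_eq_left h]; exact le_add_right le_rfl
    _ = 4 * x ^ (2:ℝ) + 4 * y ^ (2:ℝ) := by ring

lemma glue_bound {E : Type*} [MetricSpace E] [CompleteSpace E]
    [TopologicalSpace.SeparableSpace E] [MeasurableSpace E] [BorelSpace E] [Nonempty E]
    (μ ν₁ ν₂ : Measure E)
    (π₁ π₂ : Measure (E × E)) [IsProbabilityMeasure π₁] [IsProbabilityMeasure π₂]
    (h1 : IsCoupling π₁ μ ν₁) (h2 : IsCoupling π₂ μ ν₂) :
    Wcost 2 ν₁ ν₂ ≤ 4 * (∫⁻ z, ENNReal.ofReal (dist z.1 z.2 ^ (2:ℝ)) ∂π₁)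
                  + 4 * (∫⁻ z, ENNReal.ofReal (dist z.1 z.2 ^ (2:ℝ)) ∂π₂) := by
  have hfst1 : π₁.fst = μ := h1.1
  have hfst2 : π₂.fst = μ := h2.1
  set K₁ := π₁.condKernel with hK₁
  set K₂ := π₂.condKernel with hK₂
  set τ : Measure (E × E × E) := μ ⊗ₘ (K₁ ×ₖ K₂) with hτ
  haveI : IsProbabilityMeasure μ := by
    rw [← hfst1]; exact inferInstance
  haveI : IsProbabilityMeasure τ := by infer_instance
  have hmap1 : τ.map (fun p => (p.1, p.2.1)) = π₁ := by
    have : μ ⊗ₘ K₁ = π₁ := by rw [← hfst1]; exact π₁.disintegrate _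
    rw [← this]
    ext s hs
    rw [Measure.map_apply (by fun_prop) hs, Measure.compProd_apply (hs.preimage (by fun_prop)),
      Measure.compProd_apply hs]
    refine lintegral_congr fun x => ?_
    have hpre : (Prod.mk x ⁻¹' ((fun p : E × E × E => (p.1, p.2.1)) ⁻¹' s))
        = Prod.fst ⁻¹' (Prod.mk x ⁻¹' s) := rfl
    rw [hpre, Kernel.prod_apply, ← Set.prod_univ,
      Measure.prod_prod, measure_univ, mul_one]
  have hmap2 : τ.map (fun p => (p.1, p.2.2)) = π₂ := by
    have : μ ⊗ₘ K₂ = π₂ := by rw [← hfst2]; exact π₂.disintegrate _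
    rw [← this]
    ext s hs
    rw [Measure.map_apply (by fun_prop) hs, Measure.compProd_apply (hs.preimage (by fun_prop)),
      Measure.compProd_apply hs]
    refine lintegral_congr fun x => ?_
    have hpre : (Prod.mk x ⁻¹' ((fun p : E × E × E => (p.1, p.2.2)) ⁻¹' s))
        = Prod.snd ⁻¹' (Prod.mk x ⁻¹' s) := rfl
    rw [hpre, Kernel.prod_apply, ← Set.univ_prod,
      Measure.prod_prod, measure_univ, one_mul]
  set η : Measure (E × E) := τ.map (fun p => p.2) with hη
  haveI hηp : IsProbabilityMeasure η := Measure.isProbabilityMeasure_map (by fun_prop)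
  have hηc : IsCoupling η ν₁ ν₂ := by
    constructor
    · rw [hη, Measure.map_map (by fun_prop) (by fun_prop)]
      have : (Prod.fst ∘ fun p : E × E × E => p.2) =
          (Prod.snd ∘ fun p : E × E × E => (p.1, p.2.1)) := rfl
      rw [this, ← Measure.map_map (by fun_prop) (by fun_prop), hmap1, h1.2]
    · rw [hη, Measure.map_map (by fun_prop) (by fun_prop)]
      have : (Prod.snd ∘ fun p : E × E × E => p.2) =
          (Prod.snd ∘ fun p : E × E × E => (p.1, p.2.2)) := rfl
      rw [this, ← Measure.map_map (by fun_prop) (by fun_prop), hmap2, h2.2]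
  have hWle : Wcost 2 ν₁ ν₂ ≤ ∫⁻ z, ENNReal.ofReal (dist z.1 z.2 ^ (2:ℝ)) ∂η := by
    exact iInf_le_of_le η (iInf_le_of_le hηp (iInf_le_of_le hηc le_rfl))
  set f : E × E × E → ℝ≥0∞ := fun p => ENNReal.ofReal (dist p.1 p.2.1) with hf
  set g : E × E × E → ℝ≥0∞ := fun p => ENNReal.ofReal (dist p.1 p.2.2) with hg
  have hfm : AEMeasurable f τ := by fun_prop
  have hgm : AEMeasurable g τ := by fun_prop
  have hcost : ∫⁻ z, ENNReal.ofReal (dist z.1 z.2 ^ (2:ℝ)) ∂η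
      = ∫⁻ p, ENNReal.ofReal (dist p.2.1 p.2.2 ^ (2:ℝ)) ∂τ := by
    rw [hη, lintegral_map (by fun_prop) (by fun_prop)]
  have hpt : ∀ p : E × E × E, ENNReal.ofReal (dist p.2.1 p.2.2 ^ (2:ℝ)) ≤ ((f + g) p) ^ (2:ℝ) := by
    intro p
    rw [← ENNReal.ofReal_rpow_of_nonneg dist_nonneg (by norm_num : (0:ℝ) ≤ 2)]
    refine ENNReal.rpow_le_rpow ?_ (by norm_num)
    calc ENNReal.ofReal (dist p.2.1 p.2.2) ≤ ENNReal.ofReal (dist p.2.1 p.1 + dist p.1 p.2.2) :=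
          ENNReal.ofReal_le_ofReal (dist_triangle _ _ _)
      _ = ENNReal.ofReal (dist p.1 p.2.1) + ENNReal.ofReal (dist p.1 p.2.2) := by
          rw [ENNReal.ofReal_add dist_nonneg dist_nonneg, dist_comm]
      _ = (f + g) p := rfl
  have hI1 : ∫⁻ p, f p ^ (2:ℝ) ∂τ = ∫⁻ z, ENNReal.ofReal (dist z.1 z.2 ^ (2:ℝ)) ∂π₁ := by
    rw [← hmap1, lintegral_map (by fun_prop) (by fun_prop)]
    exact lintegral_congr fun p => ENNReal.ofReal_rpow_of_nonneg dist_nonneg (by norm_num)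
  have hI2 : ∫⁻ p, g p ^ (2:ℝ) ∂τ = ∫⁻ z, ENNReal.ofReal (dist z.1 z.2 ^ (2:ℝ)) ∂π₂ := by
    rw [← hmap2, lintegral_map (by fun_prop) (by fun_prop)]
    exact lintegral_congr fun p => ENNReal.ofReal_rpow_of_nonneg dist_nonneg (by norm_num)
  have hmink := ENNReal.lintegral_Lp_add_le hfm hgm (by norm_num : (1:ℝ) ≤ 2)
  have hT : ∫⁻ p, ((f + g) p) ^ (2:ℝ) ∂τ
      ≤ 4 * (∫⁻ p, f p ^ (2:ℝ) ∂τ) + 4 * (∫⁻ p, g p ^ (2:ℝ) ∂τ) := by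
    have e1 : ∫⁻ p, ((f + g) p) ^ (2:ℝ) ∂τ
        = ((∫⁻ p, ((f + g) p) ^ (2:ℝ) ∂τ) ^ (1/(2:ℝ))) ^ (2:ℝ) := by
      rw [← ENNReal.rpow_mul]; norm_num
    rw [e1]
    calc ((∫⁻ p, ((f + g) p) ^ (2:ℝ) ∂τ) ^ (1/(2:ℝ))) ^ (2:ℝ)
        ≤ ((∫⁻ p, f p ^ (2:ℝ) ∂τ) ^ (1/(2:ℝ)) + (∫⁻ p, g p ^ (2:ℝ) ∂τ) ^ (1/(2:ℝ))) ^ (2:ℝ) :=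
          ENNReal.rpow_le_rpow hmink (by norm_num)
      _ ≤ 4 * ((∫⁻ p, f p ^ (2:ℝ) ∂τ) ^ (1/(2:ℝ))) ^ (2:ℝ)
          + 4 * ((∫⁻ p, g p ^ (2:ℝ) ∂τ) ^ (1/(2:ℝ))) ^ (2:ℝ) := sq_add_le _ _
      _ = 4 * (∫⁻ p, f p ^ (2:ℝ) ∂τ) + 4 * (∫⁻ p, g p ^ (2:ℝ) ∂τ) := by
          rw [← ENNReal.rpow_mul, ← ENNReal.rpow_mul]; norm_num
  calc Wcost 2 ν₁ ν₂ ≤ ∫⁻ z, ENNReal.ofReal (dist z.1 z.2 ^ (2:ℝ)) ∂η := hWle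
    _ = ∫⁻ p, ENNReal.ofReal (dist p.2.1 p.2.2 ^ (2:ℝ)) ∂τ := hcost
    _ ≤ ∫⁻ p, ((f + g) p) ^ (2:ℝ) ∂τ := lintegral_mono hpt
    _ ≤ 4 * (∫⁻ p, f p ^ (2:ℝ) ∂τ) + 4 * (∫⁻ p, g p ^ (2:ℝ) ∂τ) := hT
    _ = _ := by rw [hI1, hI2]

end Glue

section Helpers

lemma mul_log_ge (t : ℝ) (ht : 0 ≤ t) : -(Real.exp 1)⁻¹ ≤ t * Real.log t := by
  rcases eq_or_lt_of_le ht with rfl | ht'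
  · simp; positivity
  · have h1 : 0 < (Real.exp 1 * t)⁻¹ := by positivity
    have h2 := Real.log_le_sub_one_of_pos h1
    rw [Real.log_inv, Real.log_mul (Real.exp_ne_zero 1) (ne_of_gt ht'), Real.log_exp] at h2
    have h3 : -(Real.exp 1 * t)⁻¹ ≤ Real.log t := by linarith
    have h4 : t * -(Real.exp 1 * t)⁻¹ ≤ t * Real.log t :=
      mul_le_mul_of_nonneg_left h3 ht
    have h5 : t * -(Real.exp 1 * t)⁻¹ = -(Real.exp 1)⁻¹ := by
      field_simp
    linarith [h5 ▸ h4]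

variable {Ω : Type*} [MeasurableSpace Ω] (μ : Measure Ω) {h : Ω → ℝ}

lemma densMeas_eq_nnreal (hm : Measurable h) :
    densMeas μ h = μ.withDensity (fun x => ((h x).toNNReal : ℝ≥0∞)) := rfl

lemma integral_densMeas (hm : Measurable h) (hpos : ∀ x, 0 ≤ h x) (ψ : Ω → ℝ) :
    ∫ x, ψ x ∂(densMeas μ h) = ∫ x, h x * ψ x ∂μ := by
  rw [densMeas_eq_nnreal μ hm,
    integral_withDensity_eq_integral_smul (by fun_prop : Measurable fun x => (h x).toNNReal) ψ]
  refine integral_congr_ae (Filter.Eventually.of_forall fun x => ?_)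
  simp [NNReal.smul_def, Real.coe_toNNReal _ (hpos x)]

lemma integrable_densMeas_iff (hm : Measurable h) (hpos : ∀ x, 0 ≤ h x) (ψ : Ω → ℝ) :
    Integrable ψ (densMeas μ h) ↔ Integrable (fun x => h x * ψ x) μ := by
  rw [densMeas_eq_nnreal μ hm,
    integrable_withDensity_iff_integrable_smul (by fun_prop : Measurable fun x => (h x).toNNReal)]
  refine integrable_congr (Filter.Eventually.of_forall fun x => ?_)
  simp [NNReal.smul_def, Real.coe_toNNReal _ (hpos x)]

lemma setIntegral_densMeas (hm : Measurable h) (hpos : ∀ x, 0 ≤ h x) (ψ : Ω → ℝ)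
    {s : Set Ω} (hs : MeasurableSet s) :
    ∫ x in s, ψ x ∂(densMeas μ h) = ∫ x in s, h x * ψ x ∂μ := by
  have : (densMeas μ h).restrict s = densMeas (μ.restrict s) h := restrict_withDensity hs _
  rw [this, integral_densMeas _ hm hpos]

lemma densMeas_apply (hm : Measurable h) {s : Set Ω} (hs : MeasurableSet s) :
    densMeas μ h s = ∫⁻ x in s, ENNReal.ofReal (h x) ∂μ := withDensity_apply _ hs

lemma densMeas_zero_null (hm : Measurable h) : densMeas μ h {x | h x = 0} = 0 := by
  have hs : MeasurableSet {x | h x = 0} := hm (measurableSet_singleton 0)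
  rw [densMeas_apply μ hm hs]
  have : ∫⁻ x in {x | h x = 0}, ENNReal.ofReal (h x) ∂μ
      = ∫⁻ _ in {x | h x = 0}, 0 ∂μ := by
    refine setLIntegral_congr_fun hs (fun x hx => ?_)
    have : h x = 0 := hx
    simp [this]
  rw [this, lintegral_zero]

lemma setToReal_densMeas (hm : Measurable h) (hpos : ∀ x, 0 ≤ h x) {s : Set Ω}
    (hs : MeasurableSet s) :
    (densMeas μ h s).toReal = ∫ x in s, h x ∂μ := by
  rw [densMeas_apply μ hm hs,
    integral_eq_lintegral_of_nonneg_ae (Filter.Eventually.of_forall fun x => hpos x)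
      (hm.aestronglyMeasurable.restrict)]

end Helpers


/-- `T₂(C)` implies the truncation property (Tronc). -/
theorem t2_implies_tronc
    {E : Type*} [MetricSpace E] [CompleteSpace E] [TopologicalSpace.SeparableSpace E]
    [MeasurableSpace E] [BorelSpace E]
    (μ : Measure E) (hprob : IsProbabilityMeasure μ)
    (C : ℝ) (hC : 0 < C) (hT2 : TCI 2 C μ) :
    ∀ a > Real.exp (3 / 2), ∃ c > (0 : ℝ),
      ∀ h : E → ℝ, Measurable h → (∀ x, 0 ≤ h x) →
        IsProbabilityMeasure (densMeas μ h) → relEnt (densMeas μ h) μ ≤ 1 / 2 →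
          Wcost 2 (densMeas μ h) (truncMeas μ h a) ≤
            ENNReal.ofReal c * relEnt (densMeas μ h) μ := by
  intro a ha
  have ha0 : 0 < a := lt_trans (Real.exp_pos _) ha
  refine ⟨32 * C, by positivity, ?_⟩
  intro h hm hpos hνp hH
  haveI := hprob
  haveI : Nonempty E := by
    have h1 : μ Set.univ ≠ 0 := by simp
    exact ⟨(nonempty_of_measure_ne_zero h1).choose⟩
  set ν := densMeas μ h with hνdef
  haveI := hνp
  set S := {x | h x ≤ a} with hSdef
  have hSm : MeasurableSet S := measurableSet_le hm measurable_const
  -- unfold relEnt of ν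
  by_cases hcond : ν ≪ μ ∧ Integrable (fun x => Real.log ((ν.rnDeriv μ) x).toReal) ν
  case neg =>
    rw [relEnt, if_neg hcond] at hH
    exact absurd hH (by simp)
  obtain ⟨habs, hint0⟩ := hcond
  -- identify the log-density under ν
  have hrnμ : ν.rnDeriv μ =ᵐ[μ] fun x => ENNReal.ofReal (h x) :=
    Measure.rnDeriv_withDensity μ (by fun_prop)
  have hrnν : (fun x => Real.log ((ν.rnDeriv μ) x).toReal) =ᵐ[ν] fun x => Real.log (h x) := by
    filter_upwards [hrnμ.filter_mono habs.ae_le] with x hx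
    rw [hx, ENNReal.toReal_ofReal (hpos x)]
  set φ := fun x => h x * Real.log (h x) with hφdef
  have hint1 : Integrable (fun x => Real.log (h x)) ν := hint0.congr hrnν
  have hintφ : Integrable φ μ := (integrable_densMeas_iff μ hm hpos _).mp hint1
  set Hr := ∫ x, φ x ∂μ with hHrdef
  have hrelEq : relEnt ν μ = ENNReal.ofReal Hr := by
    rw [relEnt, if_pos ⟨habs, hint0⟩, integral_congr_ae hrnν, hνdef,
      integral_densMeas μ hm hpos]
  -- real bound on Hr
  have hHr12 : Hr ≤ 1/2 := by
    rw [hrelEq] at hH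
    rcases le_or_gt Hr 0 with h' | h'
    · linarith
    · have h2 : (1/2 : ℝ≥0∞) = ENNReal.ofReal (1/2) := by
        rw [ENNReal.ofReal_div_of_pos (by norm_num), ENNReal.ofReal_one, ENNReal.ofReal_ofNat]
      rw [h2, ENNReal.ofReal_le_ofReal_iff (by norm_num)] at hH
      exact hH
  -- h is integrable
  have hinth : Integrable h μ := by
    have h1 : Integrable (fun _ : E => (1:ℝ)) ν := integrable_const 1
    have h2 := (integrable_densMeas_iff μ hm hpos (fun _ => (1:ℝ))).mp h1
    simpa using h2
  set m := (ν S).toReal with hmdef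
  set q := (ν Sᶜ).toReal with hqdef
  have hq0 : 0 ≤ q := ENNReal.toReal_nonneg
  have hm0' : 0 ≤ m := ENNReal.toReal_nonneg
  have hmq : m + q = 1 := by
    have h1 : ν S + ν Sᶜ = 1 := by
      rw [measure_add_measure_compl hSm, measure_univ]
    rw [hmdef, hqdef, ← ENNReal.toReal_add (measure_ne_top ν S) (measure_ne_top ν Sᶜ), h1]
    simp
  set A := ∫ x in S, φ x ∂μ with hAdef
  set B := ∫ x in Sᶜ, φ x ∂μ with hBdef
  have hABH : A + B = Hr := integral_add_compl hSm hintφ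
  set la := Real.log a with hladef
  have hla32 : 3/2 < la := by
    rw [hladef]
    exact (Real.lt_log_iff_exp_lt ha0).mpr ha
  have hqint : q = ∫ x in Sᶜ, h x ∂μ := setToReal_densMeas μ hm hpos hSm.compl
  have hBq : la * q ≤ B := by
    have hmono : ∀ x ∈ Sᶜ, la * h x ≤ φ x := by
      intro x hx
      have hax : a < h x := lt_of_not_ge hx
      have h1 : la ≤ Real.log (h x) := Real.log_le_log ha0 hax.le
      show la * h x ≤ h x * Real.log (h x)
      nlinarith [mul_le_mul_of_nonneg_left h1 (hpos x)]
    calc la * q = ∫ x in Sᶜ, la * h x ∂μ := by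
          rw [hqint]
          exact (integral_const_mul la _).symm
      _ ≤ B := setIntegral_mono_on (hinth.integrableOn.const_mul la)
          hintφ.integrableOn hSm.compl hmono
  have hA1 : -(Real.exp 1)⁻¹ ≤ A := by
    have h1 : ∫ _ in S, (-(Real.exp 1)⁻¹) ∂μ ≤ A :=
      setIntegral_mono_on (integrable_const _).integrableOn hintφ.integrableOn hSm
        (fun x _ => mul_log_ge (h x) (hpos x))
    rw [setIntegral_const, smul_eq_mul, measureReal_def] at h1
    have h2 : (μ S).toReal ≤ 1 := by
      have := prob_le_one (μ := μ) (s := S)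
      calc (μ S).toReal ≤ (1:ℝ≥0∞).toReal := ENNReal.toReal_mono (by simp) this
        _ = 1 := by simp
    have h3 : 0 ≤ (μ S).toReal := ENNReal.toReal_nonneg
    have h4 : 0 < (Real.exp 1)⁻¹ := by positivity
    nlinarith [h1]
  have hei : (Real.exp 1)⁻¹ ≤ 1/2 := by
    have h2 : (2:ℝ) ≤ Real.exp 1 := by nlinarith [Real.exp_one_gt_d9]
    rw [show (1:ℝ)/2 = 2⁻¹ by norm_num]
    exact inv_anti₀ two_pos h2
  have hq23 : q ≤ 2/3 := by
    nlinarith [mul_le_mul_of_nonneg_right hla32.le hq0]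
  have hm13 : 1/3 ≤ m := by linarith
  have hm0 : 0 < m := by linarith
  have hm1 : m ≤ 1 := by linarith
  have hνS0 : ν S ≠ 0 := by
    intro h0
    rw [hmdef, h0] at hm0
    simp at hm0
  have hνST : ν S ≠ ∞ := measure_ne_top ν S
  -- truncated measure
  set νa := truncMeas μ h a with hνadef
  have hνa_def : νa = (ν S)⁻¹ • ν.restrict S := rfl
  haveI hνap : IsProbabilityMeasure νa := by
    constructor
    rw [hνa_def, Measure.smul_apply, Measure.restrict_apply_univ, smul_eq_mul]
    exact ENNReal.inv_mul_cancel hνS0 hνST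
  set gd : E → ℝ≥0∞ := (ν S)⁻¹ • S.indicator (fun y => ENNReal.ofReal (h y)) with hgddef
  have hgm : Measurable gd := by
    rw [hgddef]
    exact ((measurable_ofReal.comp hm).indicator hSm).const_smul _
  have hrsS : ν.restrict S = μ.withDensity (S.indicator (fun y => ENNReal.ofReal (h y))) := by
    rw [withDensity_indicator hSm, hνdef, densMeas, restrict_withDensity hSm]
  have hνa_dens : νa = μ.withDensity gd := by
    rw [hνa_def, hrsS, hgddef]
    exact (withDensity_smul _ ((measurable_ofReal.comp hm).indicator hSm)).symm
  have hrnνa : νa.rnDeriv μ =ᵐ[μ] gd := by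
    rw [hνa_dens]; exact Measure.rnDeriv_withDensity μ hgm
  have habs_a : νa ≪ μ := by
    rw [hνa_dens]; exact withDensity_absolutelyContinuous _ _
  have hνaSc : νa Sᶜ = 0 := by
    rw [hνa_def, Measure.smul_apply, Measure.restrict_apply hSm.compl]
    simp
  have hzm : MeasurableSet {x : E | h x = 0} := hm (measurableSet_singleton 0)
  have hνa0 : νa {x | h x = 0} = 0 := by
    rw [hνa_def, Measure.smul_apply, Measure.restrict_apply hzm]
    have h1 : ν ({x | h x = 0} ∩ S) = 0 := by
      refine measure_mono_null Set.inter_subset_left ?_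
      rw [hνdef]; exact densMeas_zero_null μ hm
    rw [h1]; simp
  have hGa : (fun x => Real.log ((νa.rnDeriv μ) x).toReal)
      =ᵐ[νa] (fun x => Real.log (h x) - Real.log m) := by
    have h1 : νa.rnDeriv μ =ᵐ[νa] gd := hrnνa.filter_mono habs_a.ae_le
    have h2 : ∀ᵐ x ∂νa, x ∈ S := by
      rw [ae_iff]
      convert hνaSc using 2
      rfl
    have h3 : ∀ᵐ x ∂νa, h x ≠ 0 := by
      rw [ae_iff]
      convert hνa0 using 2
      simp
    filter_upwards [h1, h2, h3] with x hx hxS hx0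
    rw [hx, hgddef]
    simp only [Pi.smul_apply, smul_eq_mul, Set.indicator_of_mem hxS]
    rw [ENNReal.toReal_mul, ENNReal.toReal_inv, ENNReal.toReal_ofReal (hpos x), ← hmdef]
    rw [Real.log_mul (inv_ne_zero hm0.ne') hx0, Real.log_inv]
    ring
  have hint_sub : Integrable (fun x => Real.log (h x) - Real.log m) (ν.restrict S) :=
    (hint1.restrict).sub (integrable_const _)
  have hint_a' : Integrable (fun x => Real.log (h x) - Real.log m) νa := by
    rw [hνa_def]
    exact (integrable_smul_measure (ENNReal.inv_ne_zero.mpr hνST)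
      (ENNReal.inv_ne_top.mpr hνS0)).mpr hint_sub
  have hint_a : Integrable (fun x => Real.log ((νa.rnDeriv μ) x).toReal) νa :=
    hint_a'.congr hGa.symm
  have hAνS : ∫ x in S, Real.log (h x) ∂ν = A := by
    rw [hνdef, setIntegral_densMeas μ hm hpos _ hSm]
  have hrelEq_a : relEnt νa μ = ENNReal.ofReal (m⁻¹ * (A - m * Real.log m)) := by
    rw [relEnt, if_pos ⟨habs_a, hint_a⟩]
    congr 1
    rw [integral_congr_ae hGa, hνa_def, integral_smul_measure, ENNReal.toReal_inv,
      integral_sub hint1.restrict (integrable_const _), setIntegral_const, hAνS]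
    rw [smul_eq_mul, smul_eq_mul]
    rfl
  -- the key entropy comparison
  have hmlogm : -(m * Real.log m) ≤ q := by
    have h1 := Real.log_le_sub_one_of_pos (inv_pos.mpr hm0)
    rw [Real.log_inv] at h1
    have h2 : m * (m⁻¹ - 1) = 1 - m := by field_simp
    nlinarith
  have hkey : m⁻¹ * (A - m * Real.log m) ≤ 3 * max Hr 0 := by
    have hup : A - m * Real.log m ≤ A + q := by linarith
    have hqB : q ≤ B := by nlinarith [mul_le_mul_of_nonneg_right hla32.le hq0]
    rcases le_or_gt 0 Hr with hHr0 | hHr0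
    · rw [max_eq_left hHr0]
      have hinv3 : m⁻¹ ≤ 3 := by
        rw [show (3:ℝ) = (1/3)⁻¹ by norm_num]
        exact inv_anti₀ (by norm_num) hm13
      have hiv : 0 < m⁻¹ := inv_pos.mpr hm0
      calc m⁻¹ * (A - m * Real.log m) ≤ m⁻¹ * Hr := by
            apply mul_le_mul_of_nonneg_left _ hiv.le
            linarith
        _ ≤ 3 * Hr := mul_le_mul_of_nonneg_right hinv3 hHr0
    · rw [max_eq_right hHr0.le, mul_zero]
      have hneg : A - m * Real.log m ≤ 0 := by linarith
      nlinarith [inv_pos.mpr hm0]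
  have hHa_le : relEnt νa μ ≤ 3 * relEnt ν μ := by
    rw [hrelEq_a, hrelEq]
    calc ENNReal.ofReal (m⁻¹ * (A - m * Real.log m)) ≤ ENNReal.ofReal (3 * max Hr 0) :=
          ENNReal.ofReal_le_ofReal hkey
      _ = 3 * ENNReal.ofReal Hr := by
          rcases le_or_gt 0 Hr with h' | h'
          · rw [max_eq_left h', ENNReal.ofReal_mul (by norm_num)]
            norm_num
          · rw [max_eq_right h'.le, mul_zero, ENNReal.ofReal_zero,
              ENNReal.ofReal_of_nonpos h'.le, mul_zero]
  -- TCI applications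
  have hW1 : Wcost 2 μ ν ≤ ENNReal.ofReal (2*C) * relEnt ν μ := by
    have h1 := hT2 ν hνp
    rwa [ENNReal.rpow_le_rpow_iff (by norm_num : (0:ℝ) < 1/2)] at h1
  have hW2 : Wcost 2 μ νa ≤ ENNReal.ofReal (2*C) * (3 * ENNReal.ofReal Hr) := by
    have h1 := hT2 νa hνap
    rw [ENNReal.rpow_le_rpow_iff (by norm_num : (0:ℝ) < 1/2)] at h1
    calc Wcost 2 μ νa ≤ ENNReal.ofReal (2*C) * relEnt νa μ := h1
      _ ≤ _ := by
          apply mul_le_mul_right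
          rw [← hrelEq]; exact hHa_le
  rw [hrelEq] at hW1 ⊢
  -- epsilon argument
  set R₁ := ENNReal.ofReal (2*C) * ENNReal.ofReal Hr with hR₁
  set R₂ := ENNReal.ofReal (2*C) * (3 * ENNReal.ofReal Hr) with hR₂
  have hR₁T : R₁ ≠ ∞ := by
    rw [hR₁]; exact ENNReal.mul_ne_top ENNReal.ofReal_ne_top ENNReal.ofReal_ne_top
  have hR₂T : R₂ ≠ ∞ := by
    rw [hR₂]
    exact ENNReal.mul_ne_top ENNReal.ofReal_ne_top
      (ENNReal.mul_ne_top (by simp) ENNReal.ofReal_ne_top)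
  apply ENNReal.le_of_forall_pos_le_add
  intro ε hε _
  set δ := (ε : ℝ≥0∞) / 8 with hδdef
  have hδ0 : δ ≠ 0 := by
    rw [hδdef]
    simp [ENNReal.div_eq_zero_iff, hε.ne']
  have h1 : Wcost 2 μ ν < R₁ + δ :=
    lt_of_le_of_lt hW1 (ENNReal.lt_add_right hR₁T hδ0)
  have h2 : Wcost 2 μ νa < R₂ + δ :=
    lt_of_le_of_lt hW2 (ENNReal.lt_add_right hR₂T hδ0)
  simp only [Wcost, iInf_lt_iff] at h1 h2
  obtain ⟨π₁, hπ₁p, hπ₁c, hπ₁cost⟩ := h1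
  obtain ⟨π₂, hπ₂p, hπ₂c, hπ₂cost⟩ := h2
  haveI := hπ₁p
  haveI := hπ₂p
  have hglue := glue_bound μ ν νa π₁ π₂ hπ₁c hπ₂c
  have h8δ : 8 * δ ≤ (ε : ℝ≥0∞) := by
    rw [hδdef]
    exact ENNReal.mul_div_le
  have hconst : 4 * R₁ + 4 * R₂ = ENNReal.ofReal (32 * C) * ENNReal.ofReal Hr := by
    rw [hR₁, hR₂, show (32:ℝ) * C = 16 * (2*C) by ring,
      ENNReal.ofReal_mul (by norm_num : (0:ℝ) ≤ 16), ENNReal.ofReal_ofNat]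
    ring
  calc Wcost 2 ν νa
      ≤ 4 * (∫⁻ z, ENNReal.ofReal (dist z.1 z.2 ^ (2:ℝ)) ∂π₁)
        + 4 * (∫⁻ z, ENNReal.ofReal (dist z.1 z.2 ^ (2:ℝ)) ∂π₂) := hglue
    _ ≤ 4 * (R₁ + δ) + 4 * (R₂ + δ) := by
        exact add_le_add (mul_le_mul_right hπ₁cost.le 4) (mul_le_mul_right hπ₂cost.le 4)
    _ = 4 * R₁ + 4 * R₂ + 8 * δ := by ring
    _ ≤ ENNReal.ofReal (32 * C) * ENNReal.ofReal Hr + ε := by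
        rw [hconst]
        exact add_le_add le_rfl h8δ

end
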